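/- Let N ≥ 1, let A be a nonempty bounded subset of ℝ^N, and let D ∈ [0, N) be such that A is Minkowski measurable of dimension D with Minkowski content M ∈ (0,∞), i.e., lim_{t→0⁺} |A_t| / t^{N−D} = M. Then for every δ > 0, the residue of the tube zeta function at s = D is M in the following sense: lim_{s→D⁺, s real} (s − D) · ∫_0^δ t^{s−N−1} |A_t| dt = M. -/

import Mathlib

open Filter Topology MeasureTheory Metric

/-- (Lapidus–Radunović–Žubrinić) If `A ⊆ ℝ^N` is a nonempty
bounded set that is Minkowski measurable of dimension `D ∈ [0,N)` with Minkowski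
content `M ∈ (0,∞)` (i.e. `|A_t|/t^{N-D} → M` as `t → 0⁺`), then for every
`δ > 0` the tube zeta function `ζ̃_A(s) = ∫_0^δ t^{s-N-1} |A_t| dt` has residue
`M` at `s = D`, in the sense that `(s-D) ζ̃_A(s) → M` as `s → D⁺` along the
reals. -/
theorem tubeZeta_residue_eq_content (N : ℕ) (hN : 1 ≤ N)
    (A : Set (EuclideanSpace ℝ (Fin N))) (hne : A.Nonempty)
    (hbd : Bornology.IsBounded A) (D M : ℝ) (hD0 : 0 ≤ D) (hDN : D < N)
    (hM : 0 < M)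
    (hmeas : Tendsto
      (fun t : ℝ => (volume (thickening t A)).toReal / t ^ ((N : ℝ) - D))
      (𝓝[>] 0) (𝓝 M))
    (δ : ℝ) (hδ : 0 < δ) :
    Tendsto (fun s : ℝ => (s - D) *
        ∫ t in Set.Ioo (0:ℝ) δ, t ^ (s - (N : ℝ) - 1) * (volume (thickening t A)).toReal)
      (𝓝[>] D) (𝓝 M) := by
  set f : ℝ → ℝ := fun t => (volume (thickening t A)).toReal with hf_def
  have hfin : ∀ t : ℝ, volume (thickening t A) ≠ ⊤ :=
    fun t => (hbd.thickening.measure_lt_top).ne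
  have hfmono : Monotone f := fun a b hab =>
    ENNReal.toReal_mono (hfin b) (measure_mono (thickening_mono hab A))
  have hfmeas : Measurable f := hfmono.measurable
  have hf0 : ∀ t : ℝ, 0 ≤ f t := fun t => ENNReal.toReal_nonneg
  rw [Metric.tendsto_nhds]
  intro η hη
  -- choose ε
  have hmem : {t : ℝ | dist (f t / t ^ ((N : ℝ) - D)) M < η / 2} ∈ 𝓝[>] (0:ℝ) :=
    hmeas (Metric.ball_mem_nhds M (by positivity))
  obtain ⟨u, hu, husub⟩ := mem_nhdsGT_iff_exists_Ioo_subset.mp hmem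
  have hu0 : (0:ℝ) < u := hu
  set ε : ℝ := min (u / 2) (min (δ / 2) 1) with hε_def
  have hε0 : 0 < ε := by
    apply lt_min (by linarith) (lt_min (by linarith) one_pos)
  have hεu : ε < u := lt_of_le_of_lt (min_le_left _ _) (by linarith)
  have hεδ : ε < δ := lt_of_le_of_lt (le_trans (min_le_right _ _) (min_le_left _ _)) (by linarith)
  have hε1 : ε ≤ 1 := le_trans (min_le_right _ _) (min_le_right _ _)
  have hg : ∀ t ∈ Set.Ioo (0:ℝ) ε, |f t / t ^ ((N : ℝ) - D) - M| < η / 2 := by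
    intro t ht
    have : t ∈ Set.Ioo (0:ℝ) u := ⟨ht.1, ht.2.trans hεu⟩
    have := husub this
    simpa [Real.dist_eq] using this
  -- the tail constant
  set C : ℝ := ε ^ (D - (N : ℝ) - 1) * f δ * δ with hC_def
  have hC0 : 0 ≤ C := by
    apply mul_nonneg (mul_nonneg (Real.rpow_nonneg hε0.le _) (hf0 δ)) hδ.le
  -- eventual conditions
  have hIoo : Set.Ioo D (D + 1) ∈ 𝓝[>] D :=
    Ioo_mem_nhdsGT_of_mem ⟨le_refl D, by linarith⟩
  have htends : Tendsto (fun s : ℝ => ε ^ (s - D)) (𝓝[>] D) (𝓝 1) := by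
    have h1 : ContinuousAt (fun s : ℝ => ε ^ (s - D)) D := by
      exact (Real.continuousAt_const_rpow hε0.ne').comp
        ((continuous_id.sub continuous_const).continuousAt)
    have h2 := h1.tendsto.mono_left (nhdsWithin_le_nhds (s := Set.Ioi D))
    simpa using h2
  have hE2 : ∀ᶠ s in 𝓝[>] D, M - η < (M - η / 2) * ε ^ (s - D) := by
    have ht2 : Tendsto (fun s : ℝ => (M - η / 2) * ε ^ (s - D)) (𝓝[>] D)
        (𝓝 ((M - η / 2) * 1)) := (htends.const_mul _)
    exact ht2.eventually (eventually_gt_nhds (by linarith))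
  have hE3 : ∀ᶠ s in 𝓝[>] D,
      (M + η / 2) * ε ^ (s - D) + (s - D) * C < M + η := by
    have ht3 : Tendsto (fun s : ℝ => (M + η / 2) * ε ^ (s - D) + (s - D) * C) (𝓝[>] D)
        (𝓝 ((M + η / 2) * 1 + 0)) := by
      apply Tendsto.add (htends.const_mul _)
      have : Tendsto (fun s : ℝ => s - D) (𝓝[>] D) (𝓝 0) := by
        have := ((continuous_id.sub (continuous_const (y := D))).tendsto D).mono_left
          (nhdsWithin_le_nhds (s := Set.Ioi D))
        exact (by simpa using this : Tendsto (id - fun _ : ℝ => D) (𝓝[>] D) (𝓝 0))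
      simpa using this.mul_const C
    exact ht3.eventually (eventually_lt_nhds (by linarith))
  filter_upwards [hIoo, hE2, hE3] with s hs h2 h3
  obtain ⟨hsD, hsD1⟩ := hs
  have hsD0 : 0 < s - D := by linarith
  have hN1 : D < (N : ℝ) := hDN
  have hq : (-1 : ℝ) < s - D - 1 := by linarith
  have hp0 : s - (N : ℝ) - 1 < 0 := by linarith
  -- pointwise identity / bounds on `Ioo 0 ε`
  have hkey : ∀ t ∈ Set.Ioo (0:ℝ) ε,
      t ^ (s - (N : ℝ) - 1) * f t = t ^ (s - D - 1) * (f t / t ^ ((N : ℝ) - D)) := by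
    intro t ht
    have ht0 : (0:ℝ) < t := ht.1
    rw [mul_div_assoc', mul_comm (t ^ (s - D - 1)) (f t), mul_div_assoc,
      ← Real.rpow_sub ht0]
    ring_nf
  have hub : ∀ t ∈ Set.Ioo (0:ℝ) ε,
      t ^ (s - (N : ℝ) - 1) * f t ≤ (M + η / 2) * t ^ (s - D - 1) := by
    intro t ht
    rw [hkey t ht]
    have h1 := hg t ht
    have h2' : f t / t ^ ((N : ℝ) - D) ≤ M + η / 2 := by
      have := abs_lt.mp h1
      linarith [this.2]
    have htq : (0:ℝ) < t ^ (s - D - 1) := Real.rpow_pos_of_pos ht.1 _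
    calc t ^ (s - D - 1) * (f t / t ^ ((N : ℝ) - D))
        ≤ t ^ (s - D - 1) * (M + η / 2) := by
          exact mul_le_mul_of_nonneg_left h2' htq.le
      _ = (M + η / 2) * t ^ (s - D - 1) := by ring
  have hlb : ∀ t ∈ Set.Ioo (0:ℝ) ε,
      (M - η / 2) * t ^ (s - D - 1) ≤ t ^ (s - (N : ℝ) - 1) * f t := by
    intro t ht
    rw [hkey t ht]
    have h1 := hg t ht
    have h2' : M - η / 2 ≤ f t / t ^ ((N : ℝ) - D) := by
      have := abs_lt.mp h1
      linarith [this.1]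
    have htq : (0:ℝ) < t ^ (s - D - 1) := Real.rpow_pos_of_pos ht.1 _
    calc (M - η / 2) * t ^ (s - D - 1) = t ^ (s - D - 1) * (M - η / 2) := by ring
      _ ≤ t ^ (s - D - 1) * (f t / t ^ ((N : ℝ) - D)) :=
          mul_le_mul_of_nonneg_left h2' htq.le
  -- integrability
  have hIq : IntegrableOn (fun t : ℝ => t ^ (s - D - 1)) (Set.Ioo 0 ε) volume := by
    have := intervalIntegral.intervalIntegrable_rpow' (a := 0) (b := ε) hq
    rw [intervalIntegrable_iff_integrableOn_Ioc_of_le hε0.le] at this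
    exact this.mono_set Set.Ioo_subset_Ioc_self
  have haesm : ∀ (a b : ℝ), 0 < a →
      AEStronglyMeasurable (fun t : ℝ => t ^ (s - (N : ℝ) - 1) * f t)
        (volume.restrict (Set.Ioo a b)) := by
    intro a b ha
    apply AEStronglyMeasurable.mul _ (hfmeas.aestronglyMeasurable.restrict)
    apply ContinuousOn.aestronglyMeasurable _ measurableSet_Ioo
    exact ContinuousOn.rpow_const continuousOn_id fun t ht => Or.inl (ne_of_gt (ha.trans ht.1))
  have haesm0 : AEStronglyMeasurable (fun t : ℝ => t ^ (s - (N : ℝ) - 1) * f t)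
      (volume.restrict (Set.Ioo 0 ε)) := by
    apply AEStronglyMeasurable.mul _ (hfmeas.aestronglyMeasurable.restrict)
    apply ContinuousOn.aestronglyMeasurable _ measurableSet_Ioo
    exact ContinuousOn.rpow_const continuousOn_id fun t ht => Or.inl (ne_of_gt ht.1)
  have hImain : IntegrableOn (fun t : ℝ => t ^ (s - (N : ℝ) - 1) * f t)
      (Set.Ioo 0 ε) volume := by
    apply Integrable.mono' (hIq.const_mul (M + η / 2)) haesm0
    rw [ae_restrict_iff' measurableSet_Ioo]
    apply ae_of_all
    intro t ht
    have h1 : 0 ≤ t ^ (s - (N : ℝ) - 1) * f t :=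
      mul_nonneg (Real.rpow_nonneg ht.1.le _) (hf0 t)
    rw [Real.norm_eq_abs, abs_of_nonneg h1]
    exact hub t ht
  -- tail bound
  have htail_pt : ∀ t ∈ Set.Ico ε δ,
      t ^ (s - (N : ℝ) - 1) * f t ≤ ε ^ (D - (N : ℝ) - 1) * f δ := by
    intro t ht
    have ht0 : (0:ℝ) < t := hε0.trans_le ht.1
    have h1 : t ^ (s - (N : ℝ) - 1) ≤ ε ^ (s - (N : ℝ) - 1) :=
      Real.rpow_le_rpow_of_nonpos hε0 ht.1 hp0.le
    have h2' : ε ^ (s - (N : ℝ) - 1) ≤ ε ^ (D - (N : ℝ) - 1) :=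
      Real.rpow_le_rpow_of_exponent_ge hε0 hε1 (by linarith)
    have h3' : f t ≤ f δ := hfmono ht.2.le
    exact mul_le_mul (h1.trans h2') h3' (hf0 t) (Real.rpow_nonneg hε0.le _)
  have hItail : IntegrableOn (fun t : ℝ => t ^ (s - (N : ℝ) - 1) * f t)
      (Set.Ico ε δ) volume := by
    have hconst : IntegrableOn (fun _ : ℝ => ε ^ (D - (N : ℝ) - 1) * f δ)
        (Set.Ico ε δ) volume := integrableOn_const measure_Ico_lt_top.ne
    apply Integrable.mono' hconst
    · apply AEStronglyMeasurable.mul _ (hfmeas.aestronglyMeasurable.restrict)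
      apply ContinuousOn.aestronglyMeasurable _ measurableSet_Ico
      exact ContinuousOn.rpow_const continuousOn_id fun t ht =>
        Or.inl (ne_of_gt (hε0.trans_le ht.1))
    · rw [ae_restrict_iff' measurableSet_Ico]
      apply ae_of_all
      intro t ht
      have ht0 : (0:ℝ) < t := hε0.trans_le ht.1
      have h1 : 0 ≤ t ^ (s - (N : ℝ) - 1) * f t :=
        mul_nonneg (Real.rpow_nonneg ht0.le _) (hf0 t)
      rw [Real.norm_eq_abs, abs_of_nonneg h1]
      exact htail_pt t ht
  -- split the integral
  have hdisj : Disjoint (Set.Ioo (0:ℝ) ε) (Set.Ico ε δ) :=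
    Set.disjoint_left.mpr fun x hx hx' => absurd hx.2 (not_lt.mpr hx'.1)
  have hsplit :
      ∫ t in Set.Ioo (0:ℝ) δ, t ^ (s - (N : ℝ) - 1) * f t =
        (∫ t in Set.Ioo (0:ℝ) ε, t ^ (s - (N : ℝ) - 1) * f t) +
        ∫ t in Set.Ico ε δ, t ^ (s - (N : ℝ) - 1) * f t := by
    rw [← setIntegral_union hdisj measurableSet_Ico hImain hItail,
      Set.Ioo_union_Ico_eq_Ioo hε0 hεδ.le]
  -- the value of the model integral
  have hJ : ∫ t in Set.Ioo (0:ℝ) ε, t ^ (s - D - 1) = ε ^ (s - D) / (s - D) := by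
    rw [← integral_Ioc_eq_integral_Ioo, ← intervalIntegral.integral_of_le hε0.le,
      integral_rpow (Or.inl hq)]
    rw [show s - D - 1 + 1 = s - D by ring, Real.zero_rpow hsD0.ne']
    ring
  -- main integral bounds
  have hA1 : ∫ t in Set.Ioo (0:ℝ) ε, t ^ (s - (N : ℝ) - 1) * f t ≤
      (M + η / 2) * (ε ^ (s - D) / (s - D)) := by
    have := setIntegral_mono_on hImain (hIq.const_mul (M + η / 2)) measurableSet_Ioo hub
    rwa [integral_const_mul, hJ] at this
  have hA2 : (M - η / 2) * (ε ^ (s - D) / (s - D)) ≤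
      ∫ t in Set.Ioo (0:ℝ) ε, t ^ (s - (N : ℝ) - 1) * f t := by
    have := setIntegral_mono_on (hIq.const_mul (M - η / 2)) hImain measurableSet_Ioo hlb
    rwa [integral_const_mul, hJ] at this
  -- tail integral bounds
  have hT1 : 0 ≤ ∫ t in Set.Ico ε δ, t ^ (s - (N : ℝ) - 1) * f t := by
    apply setIntegral_nonneg measurableSet_Ico
    intro t ht
    exact mul_nonneg (Real.rpow_nonneg (hε0.trans_le ht.1).le _) (hf0 t)
  have hT2 : (∫ t in Set.Ico ε δ, t ^ (s - (N : ℝ) - 1) * f t) ≤ C := by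
    have hb := norm_setIntegral_le_of_norm_le_const (μ := volume)
      (s := Set.Ico ε δ) (C := ε ^ (D - (N : ℝ) - 1) * f δ) measure_Ico_lt_top
      (fun t ht => by
        have ht0 : (0:ℝ) < t := hε0.trans_le ht.1
        have h1 : 0 ≤ t ^ (s - (N : ℝ) - 1) * f t :=
          mul_nonneg (Real.rpow_nonneg ht0.le _) (hf0 t)
        rw [Real.norm_eq_abs, abs_of_nonneg h1]
        exact htail_pt t ht)
    have hvol : (volume (Set.Ico ε δ)).toReal = δ - ε := by
      rw [Real.volume_Ico]
      exact ENNReal.toReal_ofReal (by linarith)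
    rw [measureReal_def, hvol] at hb
    have := le_trans (le_abs_self _) hb
    calc (∫ t in Set.Ico ε δ, t ^ (s - (N : ℝ) - 1) * f t)
        ≤ ε ^ (D - (N : ℝ) - 1) * f δ * (δ - ε) := this
      _ ≤ ε ^ (D - (N : ℝ) - 1) * f δ * δ := by
          apply mul_le_mul_of_nonneg_left (by linarith)
          exact mul_nonneg (Real.rpow_nonneg hε0.le _) (hf0 δ)
  -- assemble
  have hne0 : s - D ≠ 0 := hsD0.ne'
  have heq : (s - D) * ((M + η / 2) * (ε ^ (s - D) / (s - D))) =
      (M + η / 2) * ε ^ (s - D) := by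
    field_simp
  have heq' : (s - D) * ((M - η / 2) * (ε ^ (s - D) / (s - D))) =
      (M - η / 2) * ε ^ (s - D) := by
    field_simp
  have hup : (s - D) * ∫ t in Set.Ioo (0:ℝ) δ, t ^ (s - (N : ℝ) - 1) * f t ≤
      (M + η / 2) * ε ^ (s - D) + (s - D) * C := by
    rw [hsplit, mul_add]
    have hx := mul_le_mul_of_nonneg_left hA1 hsD0.le
    have hy := mul_le_mul_of_nonneg_left hT2 hsD0.le
    linarith
  have hlo : (M - η / 2) * ε ^ (s - D) ≤
      (s - D) * ∫ t in Set.Ioo (0:ℝ) δ, t ^ (s - (N : ℝ) - 1) * f t := by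
    rw [hsplit, mul_add]
    have h1 : (M - η / 2) * ε ^ (s - D) ≤
        (s - D) * ∫ t in Set.Ioo (0:ℝ) ε, t ^ (s - (N : ℝ) - 1) * f t := by
      rw [← heq']
      exact mul_le_mul_of_nonneg_left hA2 hsD0.le
    have h2' : 0 ≤ (s - D) * ∫ t in Set.Ico ε δ, t ^ (s - (N : ℝ) - 1) * f t :=
      mul_nonneg hsD0.le hT1
    linarith
  rw [Real.dist_eq, abs_lt]
  constructor
  · linarith
  · linarith
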